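/- The algebra A_G(f,t) over a commutative group G is solvable of index m if and only if for all a₁,…,a_{2^m} ∈ G, the product ∏_{k=0}^{m−1} ∏_{s=0}^{2^{m−k−1}−1} f( t^{2^k−1} ∘ ∏_{q=1}^{2^k} a_{2^{k+1}s+q}, t^{2^k−1} ∘ ∏_{l=1}^{2^k} a_{2^{k+1}s+2^k+l} ) equals 0. -/

import Mathlib

open Finsupp

noncomputable def mulG {K G : Type*} [Field K] [CommGroup G] (f : G → G → K) (t : G)
    (x y : G →₀ K) : G →₀ K :=
  x.sum fun a xa => y.sum fun b yb => Finsupp.single (a * b * t) (xa * yb * f a b)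

noncomputable def derG {K G : Type*} [Field K] [CommGroup G] (f : G → G → K) (t : G) :
    ℕ → Submodule K (G →₀ K)
  | 0 => ⊤
  | k + 1 =>
    Submodule.span K
      {z : G →₀ K | ∃ x ∈ derG f t k, ∃ y ∈ derG f t k, z = mulG f t x y}

namespace Stmt4Aux

variable {K G : Type*} [Field K] [CommGroup G] (f : G → G → K) (t : G)

lemma prod_Icc_one (n : ℕ) (a : ℕ → G) :
    ∏ q ∈ Finset.Icc 1 n, a q = ∏ i ∈ Finset.range n, a (1 + i) := by
  induction n with
  | zero => simp
  | succ n ih =>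
    rw [Finset.prod_Icc_succ_top (Nat.le_add_left 1 n), ih, Finset.prod_range_succ,
      Nat.add_comm 1 n]

/-- balanced binary product of basis vectors -/
noncomputable def B (f : G → G → K) (t : G) : ℕ → (ℕ → G) → (G →₀ K)
  | 0, a => Finsupp.single (a 1) 1
  | k + 1, a => mulG f t (B f t k a) (B f t k fun i => a (2 ^ k + i))

/-- group element of the product -/
def gg (t : G) (k : ℕ) (a : ℕ → G) : G :=
  t ^ (2 ^ k - 1) * ∏ q ∈ Finset.Icc 1 (2 ^ k), a q

/-- coefficient of the product -/
def cc (f : G → G → K) (t : G) (m : ℕ) (a : ℕ → G) : K :=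
  ∏ k ∈ Finset.range m, ∏ s ∈ Finset.range (2 ^ (m - k - 1)),
    f (t ^ (2 ^ k - 1) * ∏ q ∈ Finset.Icc 1 (2 ^ k), a (2 ^ (k + 1) * s + q))
      (t ^ (2 ^ k - 1) * ∏ l ∈ Finset.Icc 1 (2 ^ k), a (2 ^ (k + 1) * s + 2 ^ k + l))

lemma mulG_single (a b : G) (α β : K) :
    mulG f t (Finsupp.single a α) (Finsupp.single b β)
      = Finsupp.single (a * b * t) (α * β * f a b) := by
  unfold mulG
  rw [Finsupp.sum_single_index, Finsupp.sum_single_index]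
  · simp
  · rw [Finsupp.sum_single_index] <;> simp

lemma mulG_zero_left (y : G →₀ K) : mulG f t 0 y = 0 := by
  unfold mulG; exact Finsupp.sum_zero_index

lemma mulG_zero_right (x : G →₀ K) : mulG f t x 0 = 0 := by
  unfold mulG
  rw [show (fun a xa => (0 : G →₀ K).sum fun b yb =>
      Finsupp.single (a * b * t) (xa * yb * f a b)) = fun _ _ => (0 : G →₀ K) from ?_]
  · exact Finset.sum_const_zero
  · funext a xa; exact Finsupp.sum_zero_index

lemma mulG_add_left (x x' y : G →₀ K) :
    mulG f t (x + x') y = mulG f t x y + mulG f t x' y := by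
  unfold mulG
  rw [Finsupp.sum_add_index']
  · intro a; simp [Finsupp.sum]
  · intro a b₁ b₂
    rw [← Finsupp.sum_add]
    congr 1; funext b yb
    rw [add_mul, add_mul, Finsupp.single_add]

lemma mulG_add_right (x y y' : G →₀ K) :
    mulG f t x (y + y') = mulG f t x y + mulG f t x y' := by
  unfold mulG
  rw [← Finsupp.sum_add]
  congr 1; funext a xa
  rw [Finsupp.sum_add_index']
  · intro b; simp
  · intro b c₁ c₂; rw [mul_add, add_mul, Finsupp.single_add]

lemma mulG_smul_left (c : K) (x y : G →₀ K) :
    mulG f t (c • x) y = c • mulG f t x y := by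
  unfold mulG
  rw [Finsupp.sum_smul_index, Finsupp.smul_sum]
  · congr 1; funext a xa
    rw [Finsupp.smul_sum]
    congr 1; funext b yb
    rw [Finsupp.smul_single']
    congr 1; ring
  · intro a; simp [Finsupp.sum]

lemma mulG_smul_right (c : K) (x y : G →₀ K) :
    mulG f t x (c • y) = c • mulG f t x y := by
  unfold mulG
  rw [Finsupp.smul_sum]
  congr 1; funext a xa
  rw [Finsupp.sum_smul_index, Finsupp.smul_sum]
  · congr 1; funext b yb
    rw [Finsupp.smul_single']
    congr 1; ring
  · intro b; simp

lemma gg_succ (k : ℕ) (a : ℕ → G) :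
    gg t (k + 1) a = gg t k a * gg t k (fun i => a (2 ^ k + i)) * t := by
  have h1 : (1 : ℕ) ≤ 2 ^ k := Nat.one_le_two_pow
  have h2 : 2 ^ (k + 1) = 2 ^ k + 2 ^ k := by rw [pow_succ]; omega
  unfold gg
  rw [prod_Icc_one, prod_Icc_one, prod_Icc_one, h2, Finset.prod_range_add]
  have h3 : ∀ i : ℕ, a (1 + (2 ^ k + i)) = a (2 ^ k + (1 + i)) := by
    intro i; congr 1; omega
  simp only [h3]
  have h4 : t ^ (2 ^ k + 2 ^ k - 1) = t ^ (2 ^ k - 1) * t ^ (2 ^ k - 1) * t := by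
    rw [← pow_add, ← pow_succ]
    congr 1; omega
  rw [h4]
  simp only [mul_assoc, mul_comm, mul_left_comm]

lemma cc_succ (k : ℕ) (a : ℕ → G) :
    cc f t (k + 1) a = cc f t k a * cc f t k (fun i => a (2 ^ k + i))
      * f (gg t k a) (gg t k (fun i => a (2 ^ k + i))) := by
  have h1 : (1 : ℕ) ≤ 2 ^ k := Nat.one_le_two_pow
  unfold cc
  rw [Finset.prod_range_succ]
  have htop : (∏ s ∈ Finset.range (2 ^ (k + 1 - k - 1)),
      f (t ^ (2 ^ k - 1) * ∏ q ∈ Finset.Icc 1 (2 ^ k), a (2 ^ (k + 1) * s + q))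
        (t ^ (2 ^ k - 1) * ∏ l ∈ Finset.Icc 1 (2 ^ k), a (2 ^ (k + 1) * s + 2 ^ k + l)))
      = f (gg t k a) (gg t k (fun i => a (2 ^ k + i))) := by
    have : k + 1 - k - 1 = 0 := by omega
    rw [this, pow_zero, Finset.prod_range_one]
    unfold gg
    simp only [Nat.mul_zero, Nat.zero_add, Nat.add_comm (2^k)]
  rw [htop]
  congr 1
  rw [← Finset.prod_mul_distrib]
  apply Finset.prod_congr rfl
  intro j hj
  have hjk : j < k := Finset.mem_range.mp hj
  have hsplit : 2 ^ (k + 1 - j - 1) = 2 ^ (k - j - 1) + 2 ^ (k - j - 1) := by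
    have : k + 1 - j - 1 = (k - j - 1) + 1 := by omega
    rw [this, pow_succ]; omega
  rw [hsplit, Finset.prod_range_add]
  congr 1
  apply Finset.prod_congr rfl
  intro s _
  have key : ∀ r : ℕ, 2 ^ (j + 1) * (2 ^ (k - j - 1) + s) + r = 2 ^ k + (2 ^ (j + 1) * s + r) := by
    intro r
    have : 2 ^ (j + 1) * 2 ^ (k - j - 1) = 2 ^ k := by
      rw [← pow_add]; congr 1; omega
    rw [Nat.mul_add, this]; ring
  simp only [key, Nat.add_assoc]

lemma B_eq (k : ℕ) (a : ℕ → G) :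
    B f t k a = Finsupp.single (gg t k a) (cc f t k a) := by
  induction k generalizing a with
  | zero =>
    unfold B gg cc
    simp
  | succ k ih =>
    show mulG f t (B f t k a) (B f t k fun i => a (2 ^ k + i)) = _
    rw [ih, ih, mulG_single, gg_succ, cc_succ]

lemma B_congr (k : ℕ) (a b : ℕ → G) (h : ∀ i, 1 ≤ i → i ≤ 2 ^ k → a i = b i) :
    B f t k a = B f t k b := by
  induction k generalizing a b with
  | zero => unfold B; rw [h 1 le_rfl (by norm_num)]
  | succ k ih =>
    have h2 : 2 ^ (k + 1) = 2 ^ k + 2 ^ k := by rw [pow_succ]; omega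
    show mulG f t (B f t k a) (B f t k fun i => a (2 ^ k + i)) =
      mulG f t (B f t k b) (B f t k fun i => b (2 ^ k + i))
    rw [ih a b fun i h1 hk => h i h1 (by omega),
      ih (fun i => a (2 ^ k + i)) (fun i => b (2 ^ k + i)) fun i h1 hk =>
        h (2 ^ k + i) (by omega) (by omega)]

lemma derG_eq (k : ℕ) :
    derG f t k = Submodule.span K (Set.range (B f t k)) := by
  induction k with
  | zero =>
    have hr : Set.range (B f t 0) = Set.range (fun g : G => Finsupp.single g (1 : K)) := by
      ext x
      constructor
      · rintro ⟨a, rfl⟩; exact ⟨a 1, rfl⟩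
      · rintro ⟨g, rfl⟩; exact ⟨fun _ => g, rfl⟩
    show (⊤ : Submodule K (G →₀ K)) = _
    rw [hr]
    have := (Finsupp.basisSingleOne (R := K) (ι := G)).span_eq
    rw [← this]
    congr 1
  | succ k ih =>
    show Submodule.span K
        {z : G →₀ K | ∃ x ∈ derG f t k, ∃ y ∈ derG f t k, z = mulG f t x y} = _
    apply le_antisymm
    · rw [Submodule.span_le]
      rintro z ⟨x, hx, y, hy, rfl⟩
      rw [ih] at hx hy
      set T := Submodule.span K (Set.range (B f t (k + 1))) with hT
      have main : ∀ x ∈ Submodule.span K (Set.range (B f t k)),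
          ∀ y ∈ Submodule.span K (Set.range (B f t k)), mulG f t x y ∈ T := by
        intro x hx
        induction hx using Submodule.span_induction with
        | mem x hxm =>
          obtain ⟨va, rfl⟩ := hxm
          intro y hy
          induction hy using Submodule.span_induction with
          | mem y hym =>
            obtain ⟨vb, rfl⟩ := hym
            set c : ℕ → G := fun i => if i ≤ 2 ^ k then va i else vb (i - 2 ^ k) with hc
            have hBa : B f t k c = B f t k va := by
              apply B_congr
              intro i h1 hk
              simp [hc, hk]
            have hBb : B f t k (fun i => c (2 ^ k + i)) = B f t k vb := by
              apply B_congr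
              intro i h1 hk
              have hle : ¬ (2 ^ k + i ≤ 2 ^ k) := by omega
              simp only [hc, hle, if_false]
              congr 1; omega
            have : mulG f t (B f t k va) (B f t k vb) = B f t (k + 1) c := by
              show _ = mulG f t (B f t k c) (B f t k fun i => c (2 ^ k + i))
              rw [hBa, hBb]
            rw [this]
            exact Submodule.subset_span ⟨c, rfl⟩
          | zero => rw [mulG_zero_right]; exact T.zero_mem
          | add y y' _ _ hy1 hy2 =>
            rw [mulG_add_right]; exact T.add_mem hy1 hy2
          | smul c y _ hy1 =>
            rw [mulG_smul_right]; exact T.smul_mem c hy1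
        | zero =>
          intro y _; rw [mulG_zero_left]; exact T.zero_mem
        | add x x' _ _ hx1 hx2 =>
          intro y hy
          rw [mulG_add_left]; exact T.add_mem (hx1 y hy) (hx2 y hy)
        | smul c x _ hx1 =>
          intro y hy
          rw [mulG_smul_left]; exact T.smul_mem c (hx1 y hy)
      exact main x hx y hy
    · rw [Submodule.span_le]
      rintro z ⟨a, rfl⟩
      apply Submodule.subset_span
      refine ⟨B f t k a, ?_, B f t k (fun i => a (2 ^ k + i)), ?_, rfl⟩
      · rw [ih]; exact Submodule.subset_span ⟨a, rfl⟩
      · rw [ih]; exact Submodule.subset_span ⟨_, rfl⟩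

end Stmt4Aux

open Stmt4Aux in
/-- `A_G(f,t)` is solvable of index `m` (i.e. `L^[m] = 0`) iff the
product (F1) vanishes for all `a₁, …, a_{2^m} ∈ G`. -/
theorem stmt4 {K G : Type*} [Field K] [CommGroup G] (f : G → G → K) (t : G)
    (m : ℕ) (hm : 1 ≤ m) :
    derG f t m = ⊥ ↔
      ∀ a : ℕ → G,
        (∏ k ∈ Finset.range m, ∏ s ∈ Finset.range (2 ^ (m - k - 1)),
            f (t ^ (2 ^ k - 1) * ∏ q ∈ Finset.Icc 1 (2 ^ k), a (2 ^ (k + 1) * s + q))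
              (t ^ (2 ^ k - 1) *
                ∏ l ∈ Finset.Icc 1 (2 ^ k), a (2 ^ (k + 1) * s + 2 ^ k + l))) = 0 := by
  rw [derG_eq, Submodule.span_eq_bot]
  constructor
  · intro h a
    have := h (B f t m a) ⟨a, rfl⟩
    rw [B_eq] at this
    have := (Finsupp.single_eq_zero).mp this
    exact this
  · intro h z hz
    obtain ⟨a, rfl⟩ := hz
    rw [B_eq]
    have : cc f t m a = 0 := h a
    rw [this, Finsupp.single_zero]
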